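/- Let 0 < q < 1, n ∈ ℕ, and u > 0 a real number. Then (q^{−2n} · w_SW(q^{−2n}u; q) / ((q;q)_n · w_SW(u; q))) · s̃_n(q^{−2n}u; q)² ≤ A_q(−u^{−1})² / (q;q)_∞². Equivalently, q^{2n²} u^{−2n} S_n(q^{−2n}u; q)² ≤ A_q(−u^{−1})² / (q;q)_∞². -/

import Mathlib

set_option maxHeartbeats 1000000

/-- The finite q-Pochhammer symbol `(a;q)_n = ∏_{j=0}^{n-1} (1 - a q^j)` in `ℝ`. -/
noncomputable def qPochR (q a : ℝ) (n : ℕ) : ℝ :=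
  ∏ j ∈ Finset.range n, (1 - a * q ^ j)

/-- The infinite q-Pochhammer symbol `(a;q)_∞ = ∏_{j=0}^{∞} (1 - a q^j)` in `ℝ`. -/
noncomputable def qPochInfR (q a : ℝ) : ℝ :=
  ∏' j : ℕ, (1 - a * q ^ j)

/-- The Stieltjes–Wigert polynomial
`S_n(x;q) = Σ_{k=0}^n q^{k²} (−x)^k / ((q;q)_k (q;q)_{n−k})` in `ℝ`. -/
noncomputable def stieltjesWigertR (q : ℝ) (n : ℕ) (x : ℝ) : ℝ :=
  ∑ k ∈ Finset.range (n + 1),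
    q ^ (k ^ 2) * (-x) ^ k / (qPochR q q k * qPochR q q (n - k))

/-- The Stieltjes–Wigert weight
`w_SW(x;q) = √(−1/(2π log q)) · exp{(1/(2 log q))(log(x/√q))²}`. -/
noncomputable def wSW (q x : ℝ) : ℝ :=
  Real.sqrt (-1 / (2 * Real.pi * Real.log q)) *
    Real.exp (1 / (2 * Real.log q) * Real.log (x / Real.sqrt q) ^ 2)

/-- The Ramanujan function restricted to real arguments:
`A_q(x) = Σ_{k=0}^∞ q^{k²} (−x)^k / (q;q)_k`. -/
noncomputable def ramanujanAqR (q x : ℝ) : ℝ :=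
  ∑' k : ℕ, q ^ (k ^ 2) * (-x) ^ k / qPochR q q k

section Aux

variable {q : ℝ}

lemma factor_pos (hq0 : 0 < q) (hq1 : q < 1) (j : ℕ) : 0 < 1 - q * q ^ j := by
  have h1 : q * q ^ j ≤ q * 1 := by
    have := pow_le_one₀ hq0.le hq1.le (n := j)
    nlinarith
  nlinarith

lemma factor_le_one (hq0 : 0 < q) (j : ℕ) : 1 - q * q ^ j ≤ 1 := by
  have : 0 ≤ q * q ^ j := by positivity
  linarith

lemma qPochR_pos (hq0 : 0 < q) (hq1 : q < 1) (n : ℕ) : 0 < qPochR q q n :=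
  Finset.prod_pos fun j _ => factor_pos hq0 hq1 j

lemma summable_neg_log (hq0 : 0 < q) (hq1 : q < 1) : Summable fun j : ℕ => -Real.log (1 - q * q ^ j) := by
  have hb : ∀ j : ℕ, -Real.log (1 - q * q ^ j) ≤ (q / (1 - q)) * q ^ j := by
    intro j
    have hf := factor_pos hq0 hq1 j
    have h1 : -Real.log (1 - q * q ^ j) = Real.log (1 - q * q ^ j)⁻¹ := by
      rw [Real.log_inv]
    have h2 : Real.log (1 - q * q ^ j)⁻¹ ≤ (1 - q * q ^ j)⁻¹ - 1 :=
      Real.log_le_sub_one_of_pos (by positivity)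
    have h3 : (1 - q * q ^ j)⁻¹ - 1 = (q * q ^ j) / (1 - q * q ^ j) := by
      field_simp
      ring
    have h4 : (q * q ^ j) / (1 - q * q ^ j) ≤ (q * q ^ j) / (1 - q) := by
      have hq' : q ^ j ≤ 1 := pow_le_one₀ hq0.le hq1.le
      have : 1 - q ≤ 1 - q * q ^ j := by nlinarith
      apply div_le_div_of_nonneg_left (by positivity) (by linarith) this
    rw [h1, ← mul_div_right_comm] at *
    linarith
  have hgeo : Summable fun j : ℕ => (q / (1 - q)) * q ^ j :=
    (summable_geometric_of_lt_one hq0.le hq1).mul_left _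
  exact Summable.of_nonneg_of_le
    (fun j => by
      have := factor_pos hq0 hq1 j
      have := factor_le_one hq0 j
      have := Real.log_nonpos (by linarith) this
      linarith)
    hb hgeo

lemma summable_log (hq0 : 0 < q) (hq1 : q < 1) : Summable fun j : ℕ => Real.log (1 - q * q ^ j) := by
  have := (summable_neg_log hq0 hq1).neg
  simpa using this

lemma qPochInfR_eq (hq0 : 0 < q) (hq1 : q < 1) : qPochInfR q q = Real.exp (∑' j : ℕ, Real.log (1 - q * q ^ j)) := by
  have := Real.rexp_tsum_eq_tprod (f := fun j => 1 - q * q ^ j)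
    (fun j => factor_pos hq0 hq1 j) (summable_log hq0 hq1)
  simpa [qPochInfR] using this.symm

lemma qPochInfR_pos (hq0 : 0 < q) (hq1 : q < 1) : 0 < qPochInfR q q := by
  rw [qPochInfR_eq hq0 hq1]; exact Real.exp_pos _

lemma qPochInfR_le (hq0 : 0 < q) (hq1 : q < 1) (m : ℕ) : qPochInfR q q ≤ qPochR q q m := by
  rw [qPochInfR_eq hq0 hq1]
  have hprod : qPochR q q m = Real.exp (∑ j ∈ Finset.range m, Real.log (1 - q * q ^ j)) := by
    rw [Real.exp_sum, qPochR]
    exact (Finset.prod_congr rfl fun j _ => (Real.exp_log (factor_pos hq0 hq1 j)).symm)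
  rw [hprod, Real.exp_le_exp]
  have hs := (summable_neg_log hq0 hq1)
  have h1 := Summable.sum_le_tsum (Finset.range m)
    (fun j _ => by
      have := factor_pos hq0 hq1 j
      have := factor_le_one hq0 j
      have := Real.log_nonpos (by linarith) this
      linarith)
    hs
  rw [tsum_neg] at h1
  simp only [Finset.sum_neg_distrib] at h1
  linarith

/-- Summability of the dominating series. -/
lemma summable_dom (hq0 : 0 < q) (hq1 : q < 1) (v : ℝ) (hv : 0 < v) : Summable fun k : ℕ => q ^ (k ^ 2) * v ^ k := by
  apply summable_of_ratio_norm_eventually_le (r := 1 / 2) (by norm_num)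
  have htend : Filter.Tendsto (fun k : ℕ => q * (q ^ 2) ^ k * v) Filter.atTop (nhds 0) := by
    have := tendsto_pow_atTop_nhds_zero_of_lt_one (by positivity : (0:ℝ) ≤ q ^ 2)
      (by nlinarith : q ^ 2 < 1)
    simpa using (this.const_mul q).mul_const v
  have hev : ∀ᶠ k : ℕ in Filter.atTop, q * (q ^ 2) ^ k * v < 1 / 2 :=
    htend.eventually (gt_mem_nhds (by norm_num))
  filter_upwards [hev] with k hk
  have hterm : q ^ ((k + 1) ^ 2) * v ^ (k + 1) = (q * (q ^ 2) ^ k * v) * (q ^ (k ^ 2) * v ^ k) := by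
    ring
  rw [Real.norm_eq_abs, Real.norm_eq_abs, abs_of_nonneg (by positivity),
    abs_of_nonneg (by positivity), hterm]
  have h0 : (0:ℝ) ≤ q ^ (k ^ 2) * v ^ k := by positivity
  nlinarith [mul_nonneg (mul_nonneg hq0.le (pow_nonneg (by positivity : (0:ℝ) ≤ q^2) k)) hv.le]

end Aux

/-- For `0 < q < 1`, `n ∈ ℕ` and real `u > 0`, with
`s̃_n(x;q) = (−1)^n √(q^n (q;q)_n) S_n(x;q)`:
`(q^{−2n} w_SW(q^{−2n}u;q)/((q;q)_n w_SW(u;q))) s̃_n(q^{−2n}u;q)² ≤ A_q(−u⁻¹)²/(q;q)_∞²`,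
equivalently `q^{2n²} u^{−2n} S_n(q^{−2n}u;q)² ≤ A_q(−u⁻¹)²/(q;q)_∞²`. -/
theorem stieltjesWigert_weighted_sq_le (q : ℝ) (hq0 : 0 < q) (hq1 : q < 1)
    (n : ℕ) (u : ℝ) (hu : 0 < u) :
    (q ^ (-(2 * (n : ℤ))) * wSW q (q ^ (-(2 * (n : ℤ))) * u) /
          (qPochR q q n * wSW q u)) *
        ((-1 : ℝ) ^ n * Real.sqrt (q ^ n * qPochR q q n) *
          stieltjesWigertR q n (q ^ (-(2 * (n : ℤ))) * u)) ^ 2 ≤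
      ramanujanAqR q (-u⁻¹) ^ 2 / qPochInfR q q ^ 2 ∧
    q ^ (2 * n ^ 2) * u ^ (-(2 * (n : ℤ))) *
        stieltjesWigertR q n (q ^ (-(2 * (n : ℤ))) * u) ^ 2 ≤
      ramanujanAqR q (-u⁻¹) ^ 2 / qPochInfR q q ^ 2 := by
  have hI := qPochInfR_pos hq0 hq1
  have hlogq : Real.log q < 0 := Real.log_neg hq0 hq1
  -- rewrite the zpow's as inverses of nat powers
  have hqz : q ^ (-(2 * (n : ℤ))) = (q ^ (2 * n))⁻¹ := by
    rw [← zpow_natCast q (2 * n), ← zpow_neg]; norm_num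
  have huz : u ^ (-(2 * (n : ℤ))) = (u ^ (2 * n))⁻¹ := by
    rw [← zpow_natCast u (2 * n), ← zpow_neg]; norm_num
  set S := stieltjesWigertR q n (q ^ (-(2 * (n : ℤ))) * u) with hS
  -- the dominating sequence
  set g : ℕ → ℝ := fun k => q ^ (k ^ 2) * (u⁻¹) ^ k / qPochR q q k with hg
  have hg_nonneg : ∀ k, 0 ≤ g k := fun k => by
    have := qPochR_pos hq0 hq1 k; positivity
  have hg_summable : Summable g := by
    apply Summable.of_nonneg_of_le hg_nonneg
      (f := fun k => (qPochInfR q q)⁻¹ * (q ^ (k ^ 2) * (u⁻¹) ^ k))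
    · intro k
      have hk := qPochR_pos hq0 hq1 k
      show q ^ (k ^ 2) * (u⁻¹) ^ k / qPochR q q k ≤ (qPochInfR q q)⁻¹ * (q ^ (k ^ 2) * (u⁻¹) ^ k)
      rw [div_eq_inv_mul]
      have hu' : (0:ℝ) < u⁻¹ := inv_pos.mpr hu
      apply mul_le_mul_of_nonneg_right _ (by positivity)
      exact inv_anti₀ hI (qPochInfR_le hq0 hq1 k)
    · exact (summable_dom hq0 hq1 u⁻¹ (by positivity)).mul_left _
  have hA : ramanujanAqR q (-u⁻¹) = ∑' k, g k := by
    unfold ramanujanAqR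
    congr 1; funext k; rw [hg]; ring_nf
  have hA_nonneg : 0 ≤ ramanujanAqR q (-u⁻¹) := by
    rw [hA]; exact tsum_nonneg hg_nonneg
  -- the key bound
  have key : |q ^ (n ^ 2) * (u⁻¹) ^ n * S| ≤ ramanujanAqR q (-u⁻¹) / qPochInfR q q := by
    have habs : |q ^ (n ^ 2) * (u⁻¹) ^ n * S| ≤
        ∑ k ∈ Finset.range (n + 1), q ^ (n ^ 2) * (u⁻¹) ^ n *
          |q ^ (k ^ 2) * (-(q ^ (-(2 * (n : ℤ))) * u)) ^ k /
            (qPochR q q k * qPochR q q (n - k))| := by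
      rw [hS, stieltjesWigertR, abs_mul, abs_of_nonneg (by positivity :
        (0:ℝ) ≤ q ^ (n ^ 2) * (u⁻¹) ^ n), ← Finset.mul_sum]
      exact mul_le_mul_of_nonneg_left (Finset.abs_sum_le_sum_abs _ _) (by positivity)
    have heq : ∀ k ∈ Finset.range (n + 1), q ^ (n ^ 2) * (u⁻¹) ^ n *
          |q ^ (k ^ 2) * (-(q ^ (-(2 * (n : ℤ))) * u)) ^ k /
            (qPochR q q k * qPochR q q (n - k))| =
        q ^ ((n - k) ^ 2) * (u⁻¹) ^ (n - k) / (qPochR q q k * qPochR q q (n - k)) := by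
      intro k hk
      have hkn : k ≤ n := Finset.mem_range_succ_iff.mp hk
      obtain ⟨m, rfl⟩ : ∃ m, n = k + m := ⟨n - k, (Nat.add_sub_cancel' hkn).symm⟩
      have hm : k + m - k = m := by omega
      rw [hm, hqz]
      have hPk := qPochR_pos hq0 hq1 k
      have hPm := qPochR_pos hq0 hq1 m
      have hx : (0:ℝ) < (q ^ (2 * (k + m)))⁻¹ * u :=
        mul_pos (inv_pos.mpr (pow_pos hq0 _)) hu
      simp only [abs_div, abs_mul, abs_pow, abs_neg, abs_inv]
      rw [abs_of_pos hq0, abs_of_pos hu, abs_of_pos hPk, abs_of_pos hPm]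
      field_simp
      simp only [div_pow, one_div, inv_pow]
      field_simp
      ring
    rw [Finset.sum_congr rfl heq] at habs
    have hstep : ∑ k ∈ Finset.range (n + 1),
        q ^ ((n - k) ^ 2) * (u⁻¹) ^ (n - k) / (qPochR q q k * qPochR q q (n - k)) ≤
        ∑ k ∈ Finset.range (n + 1), (qPochInfR q q)⁻¹ * g (n - k) := by
      apply Finset.sum_le_sum
      intro k hk
      have hPk := qPochR_pos hq0 hq1 k
      have hPm := qPochR_pos hq0 hq1 (n - k)
      have hu' : (0:ℝ) < u⁻¹ := inv_pos.mpr hu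
      have h2 : (qPochInfR q q)⁻¹ * g (n - k) =
          q ^ ((n - k) ^ 2) * (u⁻¹) ^ (n - k) / (qPochInfR q q * qPochR q q (n - k)) := by
        show (qPochInfR q q)⁻¹ * (q ^ ((n - k) ^ 2) * (u⁻¹) ^ (n - k) / qPochR q q (n - k)) = _
        field_simp
      rw [h2]
      gcongr
      exact qPochInfR_le hq0 hq1 k
    have hrefl : ∑ k ∈ Finset.range (n + 1), (qPochInfR q q)⁻¹ * g (n - k) =
        (qPochInfR q q)⁻¹ * ∑ j ∈ Finset.range (n + 1), g j := by
      rw [← Finset.mul_sum]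
      congr 1
      have := Finset.sum_range_reflect g (n + 1)
      simpa using this
    have htsum : ∑ j ∈ Finset.range (n + 1), g j ≤ ∑' k, g k :=
      Summable.sum_le_tsum _ (fun i _ => hg_nonneg i) hg_summable
    calc |q ^ (n ^ 2) * (u⁻¹) ^ n * S| ≤ _ := habs
      _ ≤ (qPochInfR q q)⁻¹ * ∑ j ∈ Finset.range (n + 1), g j := by
          rw [← hrefl]; exact hstep
      _ ≤ (qPochInfR q q)⁻¹ * ∑' k, g k := by
          apply mul_le_mul_of_nonneg_left htsum (by positivity)
      _ = ramanujanAqR q (-u⁻¹) / qPochInfR q q := by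
          rw [hA, div_eq_inv_mul]
  -- part 2
  have part2 : q ^ (2 * n ^ 2) * u ^ (-(2 * (n : ℤ))) * S ^ 2 ≤
      ramanujanAqR q (-u⁻¹) ^ 2 / qPochInfR q q ^ 2 := by
    have hL : q ^ (2 * n ^ 2) * u ^ (-(2 * (n : ℤ))) * S ^ 2 =
        (q ^ (n ^ 2) * (u⁻¹) ^ n * S) ^ 2 := by
      rw [huz]
      field_simp
      rw [one_div, inv_pow]
      field_simp
      ring
    have hR : ramanujanAqR q (-u⁻¹) ^ 2 / qPochInfR q q ^ 2 =
        (ramanujanAqR q (-u⁻¹) / qPochInfR q q) ^ 2 := by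
      rw [div_pow]
    rw [hL, hR]
    have := abs_le.mp key
    exact sq_le_sq' this.1 this.2
  refine ⟨?_, part2⟩
  -- part 1: the left-hand side is equal to that of part 2
  have hw0 : 0 < wSW q u := by
    unfold wSW
    have h1 : (0:ℝ) < -1 / (2 * Real.pi * Real.log q) := by
      rw [div_pos_iff]
      right
      constructor
      · norm_num
      · nlinarith [Real.pi_pos]
    positivity
  have hwlem : wSW q ((q ^ (2 * n))⁻¹ * u) =
      q ^ (2 * n ^ 2 + n) * (u ^ (2 * n))⁻¹ * wSW q u := by
    unfold wSW
    have hsq : Real.sqrt q > 0 := Real.sqrt_pos.mpr hq0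
    have hlog1 : Real.log ((q ^ (2 * n))⁻¹ * u / Real.sqrt q) =
        -((2 * n : ℕ) * Real.log q) + Real.log u - Real.log q / 2 := by
      rw [Real.log_div (by positivity) (by positivity),
        Real.log_mul (by positivity) (by positivity), Real.log_inv, Real.log_pow,
        Real.log_sqrt hq0.le]
    have hlog2 : Real.log (u / Real.sqrt q) = Real.log u - Real.log q / 2 := by
      rw [Real.log_div (by positivity) (by positivity), Real.log_sqrt hq0.le]
    have hq2 : q ^ (2 * n ^ 2 + n) * (u ^ (2 * n))⁻¹ =
        Real.exp ((2 * n ^ 2 + n : ℕ) * Real.log q - (2 * n : ℕ) * Real.log u) := by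
      rw [Real.exp_sub, ← Real.log_pow, ← Real.log_pow, Real.exp_log (pow_pos hq0 _),
        Real.exp_log (pow_pos hu _), div_eq_mul_inv]
    rw [hlog1, hlog2, hq2, mul_left_comm, ← Real.exp_add]
    congr 1
    rw [Real.exp_eq_exp]
    have hlq : Real.log q ≠ 0 := ne_of_lt hlogq
    push_cast
    field_simp
    ring
  have hPn := qPochR_pos hq0 hq1 n
  have hsqPn : Real.sqrt (q ^ n * qPochR q q n) ^ 2 = q ^ n * qPochR q q n :=
    Real.sq_sqrt (mul_nonneg (pow_nonneg hq0.le n) hPn.le)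
  have hneg1 : ((-1 : ℝ) ^ n) ^ 2 = 1 := by
    rw [← pow_mul, mul_comm, pow_mul]
    norm_num
  have hLHSeq : (q ^ (-(2 * (n : ℤ))) * wSW q (q ^ (-(2 * (n : ℤ))) * u) /
          (qPochR q q n * wSW q u)) *
        ((-1 : ℝ) ^ n * Real.sqrt (q ^ n * qPochR q q n) * S) ^ 2 =
      q ^ (2 * n ^ 2) * u ^ (-(2 * (n : ℤ))) * S ^ 2 := by
    rw [mul_pow, mul_pow, hsqPn, hneg1, one_mul, hqz, huz, hwlem]
    field_simp
    ring
  rw [hLHSeq]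
  exact part2
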